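/- Let X and Y be real Banach spaces and A : X → Y a weakly compact bounded linear operator. Then for every σ > 0 and every real constant C the following are equivalent: (a) for every y ∈ B_Y and every net (x_λ) ⊆ B_X converging weakly to 0, limsup_λ ‖y + σ A x_λ‖ ≤ C; (b) for every y ∈ B_Y and every net (x**_λ) ⊆ B_{X**} converging to 0 in the w*-topology σ(X**, X*), limsup_λ ‖j_Y(y) + σ A** x**_λ‖ ≤ C (norm in Y**). (This expresses that the modulus of asymptotic uniform smoothness of A equals the w*-modulus of A** : X** → Y; it is the ξ = 0 case of the paper's Corollary 5.2, where B-trees of order ω⁰ = 1 reduce to nets.) -/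

import Mathlib

open Filter Topology Pointwise NormedSpace

noncomputable section

variable {X Y : Type*} [NormedAddCommGroup X] [NormedSpace ℝ X] [CompleteSpace X]
  [NormedAddCommGroup Y] [NormedSpace ℝ Y] [CompleteSpace Y]

/-- The adjoint `A* : Y* → X*` of a bounded linear operator, `(A* g)(x) = g (A x)`. -/
def opAdjoint (A : X →L[ℝ] Y) : StrongDual ℝ Y →L[ℝ] StrongDual ℝ X :=
  (ContinuousLinearMap.compSL X Y ℝ (RingHom.id ℝ) (RingHom.id ℝ)).flip A

/-- An operator is weakly compact if the image of the closed unit ball is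
relatively compact in the weak topology of the codomain. -/
def IsWeaklyCompactOp (A : X →L[ℝ] Y) : Prop :=
  IsCompact (closure (toWeakSpace ℝ Y '' (A '' Metric.closedBall 0 1)))

section Auxiliary

universe v

theorem opAdjoint_apply' (A : X →L[ℝ] Y) (g : StrongDual ℝ Y) (x : X) :
    opAdjoint A g x = g (A x) := rfl

/-- Helly / finite Goldstine: an element of the bidual unit ball can be finitely
weak*-approximated from the unit ball of `X`. -/
theorem helly_approx (Φ : StrongDual ℝ (StrongDual ℝ X)) (hΦ : ‖Φ‖ ≤ 1)
    (F : Finset (StrongDual ℝ X)) {ε : ℝ} (hε : 0 < ε) :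
    ∃ x : X, ‖x‖ ≤ 1 ∧ ∀ f ∈ F, |f x - Φ f| < ε := by
  classical
  set E := (↥F → ℝ) with hE
  set T : X →ₗ[ℝ] E := LinearMap.pi (fun f => ((f : StrongDual ℝ X) : X →ₗ[ℝ] ℝ)) with hT
  set S : Set E := T '' Metric.closedBall 0 1 with hS
  have hSconv : Convex ℝ S := (convex_closedBall (0 : X) 1).linear_image T
  set c : E := fun f => Φ f with hc
  have hmem : c ∈ closure S := by
    by_contra hcS
    obtain ⟨φ, u, hφS, hφc⟩ :=
      geometric_hahn_banach_closed_point (hSconv.closure) isClosed_closure hcS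
    set e : ↥F → E := fun f => Pi.single f 1 with he
    have hdecomp : ∀ v : E, v = ∑ f : ↥F, v f • e f := by
      intro v; funext j
      rw [Finset.sum_apply]
      have hone : ∀ x : ↥F, (v x • e x) j = if j = x then v x else 0 := by
        intro x
        have hsmul : (v x • e x) j = v x * (e x j) := rfl
        rw [hsmul]; simp only [he]
        by_cases hjx : j = x
        · subst hjx; simp [Pi.single_eq_same]
        · simp [Pi.single_eq_of_ne hjx, hjx]
      rw [Finset.sum_congr rfl (fun x _ => hone x)]
      simp [Finset.sum_ite_eq]
    have hφ_eq : ∀ v : E, φ v = ∑ f : ↥F, v f * φ (e f) := by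
      intro v
      conv_lhs => rw [hdecomp v]
      rw [map_sum]
      simp [smul_eq_mul]
    set h : StrongDual ℝ X := ∑ f : ↥F, φ (e f) • (f : StrongDual ℝ X) with hh
    have hx_eq : ∀ x : X, h x = φ (T x) := by
      intro x
      rw [hφ_eq (T x)]
      simp only [hh, ContinuousLinearMap.sum_apply, ContinuousLinearMap.coe_smul',
        Pi.smul_apply, smul_eq_mul]
      refine Finset.sum_congr rfl fun f _ => ?_
      have : (T x) f = (f : StrongDual ℝ X) x := rfl
      rw [this]; ring
    have hu_pos : 0 < u := by
      have h0 : (0 : E) ∈ closure S := subset_closure ⟨0, by simp, by simp⟩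
      have := hφS 0 h0
      simpa using this
    have hball : ∀ x : X, ‖x‖ ≤ 1 → |h x| ≤ u := by
      intro x hx
      have h1 : h x < u := by
        rw [hx_eq]
        exact hφS _ (subset_closure ⟨x, by simpa [Metric.mem_closedBall, dist_zero_right] using hx, rfl⟩)
      have h2 : -(h x) < u := by
        have : h (-x) < u := by
          rw [hx_eq]
          exact hφS _ (subset_closure ⟨-x, by simpa [Metric.mem_closedBall, dist_zero_right] using hx, rfl⟩)
        simpa using this
      rw [abs_le]; constructor <;> linarith
    have hnorm : ‖h‖ ≤ u := by
      refine ContinuousLinearMap.opNorm_le_bound _ hu_pos.le fun x => ?_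
      rcases eq_or_ne x 0 with rfl | hx0
      · simp
      · have hx1 : ‖‖x‖⁻¹ • x‖ ≤ 1 := by
          rw [norm_smul, norm_inv, norm_norm]
          rw [inv_mul_cancel₀ (norm_ne_zero_iff.2 hx0)]
        have := hball _ hx1
        have heq : h (‖x‖⁻¹ • x) = ‖x‖⁻¹ * h x := by
          simp [map_smul, smul_eq_mul]
        rw [heq, abs_mul, abs_inv, abs_norm] at this
        have hxpos : 0 < ‖x‖ := norm_pos_iff.2 hx0
        calc ‖h x‖ = ‖x‖ * (‖x‖⁻¹ * |h x|) := by
              rw [Real.norm_eq_abs]; field_simp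
          _ ≤ ‖x‖ * u := by
              apply mul_le_mul_of_nonneg_left this hxpos.le
          _ = u * ‖x‖ := mul_comm _ _
    have hΦh : Φ h = φ c := by
      rw [hh, map_sum, hφ_eq c]
      refine Finset.sum_congr rfl fun f _ => ?_
      simp [hc, smul_eq_mul, mul_comm]
    have : φ c ≤ u := by
      rw [← hΦh]
      calc Φ h ≤ |Φ h| := le_abs_self _
        _ ≤ ‖Φ‖ * ‖h‖ := by
            simpa [Real.norm_eq_abs] using Φ.le_opNorm h
        _ ≤ 1 * u := by
            apply mul_le_mul hΦ hnorm (norm_nonneg _) zero_le_one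
        _ = u := one_mul u
    linarith
  rw [Metric.mem_closure_iff] at hmem
  obtain ⟨b, ⟨x, hx, rfl⟩, hdist⟩ := hmem ε hε
  refine ⟨x, by simpa [Metric.mem_closedBall, dist_zero_right] using hx, fun f hf => ?_⟩
  have := dist_le_pi_dist c (T x) ⟨f, hf⟩
  have h2 : dist (c ⟨f, hf⟩) ((T x) ⟨f, hf⟩) < ε :=
    lt_of_le_of_lt (by simpa using this) (by simpa [dist_comm] using hdist)
  have h3 : (T x) ⟨f, hf⟩ = f x := rfl
  have h4 : c ⟨f, hf⟩ = Φ f := rfl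
  rw [Real.dist_eq, h3, h4] at h2
  rwa [abs_sub_comm]

/-- Kaplansky-type countable reduction: if `0` is in the weak closure of `S`
(formulated via finite families of functionals), then a countable subset of `S`
suffices. -/
theorem countable_dodge (S : Set X)
    (hdodge : ∀ (m : ℕ) (g : Fin m → StrongDual ℝ X) (q : ℝ), 0 < q →
      ∃ x ∈ S, ∀ t, |g t x| < q) :
    ∃ M : Set X, M.Countable ∧ M ⊆ S ∧
      ∀ (m : ℕ) (g : Fin m → StrongDual ℝ X) (q : ℝ), 0 < q → ∃ x ∈ M, ∀ t, |g t x| < q := by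
  classical
  have key : ∀ m k : ℕ, ∃ T : Finset X, ↑T ⊆ S ∧
      ∀ g : Fin m → StrongDual ℝ X, (∀ t, ‖g t‖ ≤ 1) →
        ∃ x ∈ T, ∀ t, |g t x| < 1 / (k + 1) := by
    intro m k
    set q : ℝ := 1 / (k + 1) with hq
    have hqpos : 0 < q := by positivity
    set B : Set (Fin m → WeakDual ℝ X) :=
      Set.pi Set.univ (fun _ => WeakDual.toStrongDual ⁻¹' Metric.closedBall 0 1) with hB
    have hBcomp : IsCompact B :=
      isCompact_univ_pi fun _ => WeakDual.isCompact_closedBall (0 : StrongDual ℝ X) 1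
    set Z : X → Set (Fin m → WeakDual ℝ X) :=
      (fun x => {g | ∃ t, q ≤ |g t x|}) with hZ
    have hZclosed : ∀ x : X, IsClosed (Z x) := by
      intro x
      have : Z x = ⋃ t : Fin m, {g : Fin m → WeakDual ℝ X | q ≤ |g t x|} := by
        ext g; simp [hZ]
      rw [this]
      refine isClosed_iUnion_of_finite fun t => ?_
      have hcont : Continuous fun g : Fin m → WeakDual ℝ X => |g t x| :=
        ((WeakDual.eval_continuous x).comp (continuous_apply t)).abs
      exact isClosed_le continuous_const hcont
    have hempty : B ∩ ⋂ (x : ↥S), Z x.1 = ∅ := by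
      by_contra hne
      obtain ⟨g, hgB, hgZ⟩ := Set.nonempty_iff_ne_empty.2 hne
      obtain ⟨x, hxS, hx⟩ := hdodge m (fun t => WeakDual.toStrongDual (g t)) q hqpos
      rw [Set.mem_iInter] at hgZ
      obtain ⟨t, ht⟩ := hgZ ⟨x, hxS⟩
      have : |(WeakDual.toStrongDual (g t)) x| < q := hx t
      rw [WeakDual.toStrongDual_apply] at this
      exact absurd ht (not_le.2 this)
    obtain ⟨T₀, hT₀⟩ := hBcomp.elim_finite_subfamily_closed _ (fun x : ↥S => hZclosed x.1) hempty
    refine ⟨T₀.image (fun p => p.1), ?_, ?_⟩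
    · intro x hx
      simp only [Finset.coe_image, Set.mem_image, Finset.mem_coe] at hx
      obtain ⟨p, _, rfl⟩ := hx
      exact p.2
    · intro g hg
      have hgB : (fun t => StrongDual.toWeakDual (g t)) ∈ B := by
        intro t _
        simpa [Metric.mem_closedBall, dist_zero_right] using hg t
      have : (fun t => StrongDual.toWeakDual (g t)) ∉ ⋂ p ∈ T₀, Z p.1 := by
        intro hmem
        exact absurd (Set.mem_inter hgB hmem) (by rw [hT₀]; exact fun h => h)
      rw [Set.mem_iInter₂] at this
      push_neg at this
      obtain ⟨p, hpT, hpZ⟩ := this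
      refine ⟨p.1, Finset.mem_image_of_mem _ hpT, fun t => ?_⟩
      rw [hZ, Set.mem_setOf_eq] at hpZ
      push_neg at hpZ
      exact hpZ t
  choose T hTS hT using key
  refine ⟨⋃ m, ⋃ k, (T m k : Set X), Set.countable_iUnion fun m =>
    Set.countable_iUnion fun k => (T m k).countable_toSet, ?_, ?_⟩
  · intro x hx
    simp only [Set.mem_iUnion] at hx
    obtain ⟨m, k, hx⟩ := hx
    exact hTS m k hx
  · intro m g q hqpos
    set r : ℝ := 1 + ∑ t, ‖g t‖ with hr
    have hrpos : 0 < r := by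
      have : (0:ℝ) ≤ ∑ t, ‖g t‖ := Finset.sum_nonneg fun t _ => norm_nonneg _
      linarith
    have hrbig : ∀ t, ‖g t‖ ≤ r := by
      intro t
      have h1 : ‖g t‖ ≤ ∑ s, ‖g s‖ :=
        Finset.single_le_sum (fun s _ => norm_nonneg (g s)) (Finset.mem_univ t)
      linarith
    obtain ⟨k, hk⟩ := exists_nat_gt (r / q)
    have hkq : r / (k + 1) < q := by
      rw [div_lt_iff₀ (by positivity)]
      have h2 : r / q < k + 1 := by linarith
      rw [div_lt_iff₀ hqpos] at h2
      linarith [mul_comm q ((k:ℝ) + 1)]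
    obtain ⟨x, hxT, hx⟩ := hT m k (fun t => r⁻¹ • g t) (by
      intro t
      rw [norm_smul, norm_inv, Real.norm_eq_abs, abs_of_pos hrpos]
      rw [inv_mul_le_iff₀ hrpos, mul_one]
      exact hrbig t)
    refine ⟨x, Set.mem_iUnion.2 ⟨m, Set.mem_iUnion.2 ⟨k, hxT⟩⟩, fun t => ?_⟩
    have := hx t
    have happ : (r⁻¹ • g t) x = r⁻¹ * g t x := rfl
    rw [happ, abs_mul, abs_inv, abs_of_pos hrpos] at this
    have h3 : |g t x| < r / (k + 1) := by
      rw [div_eq_mul_inv, mul_comm]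
      calc |g t x| = r * (r⁻¹ * |g t x|) := by field_simp
        _ < r * (1 / (k+1)) := by
            apply mul_lt_mul_of_pos_left this hrpos
        _ = (k+1:ℝ)⁻¹ * r := by ring
    linarith

/-- The bad set has `0` in its weak closure. -/
theorem dodge_bad {ι : Type v} [Preorder ι] [IsDirected ι (· ≤ ·)] [Nonempty ι]
    (A : X →L[ℝ] Y) {σ C δ : ℝ} (hσ : 0 < σ) (hδ : 0 < δ)
    (y : Y) (xss : ι → StrongDual ℝ (StrongDual ℝ X)) (hxss : ∀ i, ‖xss i‖ ≤ 1)
    (hnull : ∀ f : StrongDual ℝ X, Tendsto (fun i => xss i f) atTop (𝓝 0))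
    (hfreq : ∃ᶠ i in atTop, C + δ <
      ‖inclusionInDoubleDual ℝ Y y + σ • (xss i).comp (opAdjoint A)‖) :
    ∀ (m : ℕ) (g : Fin m → StrongDual ℝ X) (q : ℝ), 0 < q →
      ∃ x ∈ {x : X | ‖x‖ ≤ 1 ∧ C + δ/2 < ‖y + σ • A x‖}, ∀ t, |g t x| < q := by
  classical
  intro m g q hq
  have hev : ∀ᶠ i in atTop, ∀ t : Fin m, |xss i (g t)| < q / 2 := by
    rw [eventually_all]
    intro t
    have := Metric.tendsto_nhds.1 (hnull (g t)) (q / 2) (by positivity)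
    refine this.mono fun i hi => ?_
    rwa [Real.dist_eq, sub_zero] at hi
  obtain ⟨i, hibad, hismall⟩ := (hfreq.and_eventually hev).exists
  set z : StrongDual ℝ (StrongDual ℝ Y) :=
    inclusionInDoubleDual ℝ Y y + σ • (xss i).comp (opAdjoint A) with hz
  obtain ⟨gs, hgs1, hgs2⟩ := z.exists_lt_apply_of_lt_opNorm hibad
  set ε₁ : ℝ := min (q/4) (δ/(4*σ)) with hε₁
  have hε₁pos : 0 < ε₁ := lt_min (by positivity) (by positivity)
  set a : StrongDual ℝ X := opAdjoint A gs with ha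
  obtain ⟨x, hx1, hx2⟩ := helly_approx (xss i) (hxss i)
    ((Finset.image g Finset.univ) ∪ {a}) hε₁pos
  have hax : |a x - xss i a| < ε₁ := hx2 a (Finset.mem_union_right _ (Finset.mem_singleton_self a))
  have hzgs : z gs = gs y + σ * xss i a := by
    simp [hz, ha, NormedSpace.dual_def, ContinuousLinearMap.add_apply,
      ContinuousLinearMap.smul_apply, smul_eq_mul]
  refine ⟨x, ⟨hx1, ?_⟩, ?_⟩
  · have hval : |gs y + σ * a x| > C + δ/2 := by
      have h1 : |z gs| > C + δ := by
        rw [← Real.norm_eq_abs]; exact hgs2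
      have h2 : |(gs y + σ * a x) - z gs| ≤ σ * ε₁ := by
        rw [hzgs]
        have : (gs y + σ * a x) - (gs y + σ * xss i a) = σ * (a x - xss i a) := by ring
        rw [this, abs_mul, abs_of_pos hσ]
        exact mul_le_mul_of_nonneg_left hax.le hσ.le
      have h3 : σ * ε₁ ≤ δ/4 := by
        have : ε₁ ≤ δ/(4*σ) := min_le_right _ _
        calc σ * ε₁ ≤ σ * (δ/(4*σ)) := mul_le_mul_of_nonneg_left this hσ.le
          _ = δ/4 := by field_simp
      have h4 : |gs y + σ * a x| ≥ |z gs| - |(gs y + σ * a x) - z gs| := by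
        have h5 : |z gs - (gs y + σ * a x)| = |(gs y + σ * a x) - z gs| := abs_sub_comm _ _
        linarith [abs_sub_abs_le_abs_sub (z gs) (gs y + σ * a x), h5.le]
      linarith
    have hcalc : gs (y + σ • A x) = gs y + σ * a x := by
      rw [map_add, map_smul, smul_eq_mul, ha, opAdjoint_apply']
    calc C + δ/2 < |gs y + σ * a x| := hval
      _ = |gs (y + σ • A x)| := by rw [hcalc]
      _ = ‖gs (y + σ • A x)‖ := (Real.norm_eq_abs _).symm
      _ ≤ ‖gs‖ * ‖y + σ • A x‖ := gs.le_opNorm _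
      _ ≤ 1 * ‖y + σ • A x‖ := by
          apply mul_le_mul_of_nonneg_right hgs1.le (norm_nonneg _)
      _ = ‖y + σ • A x‖ := one_mul _
  · intro t
    have hmem : g t ∈ (Finset.image g Finset.univ) ∪ {a} :=
      Finset.mem_union_left _ (Finset.mem_image_of_mem g (Finset.mem_univ t))
    have h6 := hx2 (g t) hmem
    have h7 := hismall t
    calc |g t x| ≤ |g t x - xss i (g t)| + |xss i (g t)| := by
          have := abs_add_le (g t x - xss i (g t)) (xss i (g t))
          simpa using this
      _ < ε₁ + q/2 := add_lt_add h6 h7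
      _ ≤ q/4 + q/2 := by linarith [min_le_left (q/4) (δ/(4*σ))]
      _ < q := by linarith

end Auxiliary

/-- the ξ = 0 case of Corollary 5.2: for a weakly compact operator,
the net form of the AUS modulus of `A` agrees with the w*-net form for
`A** : X** → Y`. -/
theorem statement2 (A : X →L[ℝ] Y) (hA : IsWeaklyCompactOp A)
    (σ : ℝ) (hσ : 0 < σ) (C : ℝ) :
    (∀ (ι : Type u) [Preorder ι] [IsDirected ι (· ≤ ·)] [Nonempty ι],
      ∀ y : Y, ‖y‖ ≤ 1 → ∀ x : ι → X, (∀ i, ‖x i‖ ≤ 1) →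
        (∀ f : StrongDual ℝ X, Tendsto (fun i => f (x i)) atTop (𝓝 0)) →
        limsup (fun i => ‖y + σ • A (x i)‖) atTop ≤ C) ↔
    (∀ (ι : Type u) [Preorder ι] [IsDirected ι (· ≤ ·)] [Nonempty ι],
      ∀ y : Y, ‖y‖ ≤ 1 → ∀ xss : ι → StrongDual ℝ (StrongDual ℝ X), (∀ i, ‖xss i‖ ≤ 1) →
        (∀ f : StrongDual ℝ X, Tendsto (fun i => xss i f) atTop (𝓝 0)) →
        limsup (fun i =>
          ‖inclusionInDoubleDual ℝ Y y + σ • (xss i).comp (opAdjoint A)‖) atTop ≤ C) := by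
  constructor
  · intro h ι _ _ _ y hy xss hxss hnull
    classical
    by_contra hcon
    rw [not_le] at hcon
    set Lv : ℝ := limsup (fun i =>
        ‖inclusionInDoubleDual ℝ Y y + σ • (xss i).comp (opAdjoint A)‖) atTop with hLv
    set δ : ℝ := (Lv - C)/2 with hδdef
    have hδ : 0 < δ := by simp only [hδdef]; linarith
    have hcob : IsCoboundedUnder (· ≤ ·) atTop (fun i =>
        ‖inclusionInDoubleDual ℝ Y y + σ • (xss i).comp (opAdjoint A)‖) :=
      isCoboundedUnder_le_of_le atTop (x := 0) (fun i => norm_nonneg (inclusionInDoubleDual ℝ Y y + σ • (xss i).comp (opAdjoint A)))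
    have hfreq : ∃ᶠ i in atTop, C + δ <
        ‖inclusionInDoubleDual ℝ Y y + σ • (xss i).comp (opAdjoint A)‖ := by
      have : C + δ < Lv := by simp only [hδdef]; linarith
      exact frequently_lt_of_lt_limsup hcob this
    have hdodge := dodge_bad A hσ hδ y xss hxss hnull hfreq
    obtain ⟨M, hMcount, hMsub, hMdodge⟩ :=
      countable_dodge {x : X | ‖x‖ ≤ 1 ∧ C + δ/2 < ‖y + σ • A x‖} hdodge
    haveI : Countable ↥M := hMcount.to_subtype
    set D := (↥M → ℝ) with hD
    haveI : Small.{u} D := by infer_instance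
    set J := (Finset (Shrink.{u} D) × ℕ) with hJ
    haveI : IsDirected (Finset (Shrink.{u} D)) (· ≤ ·) :=
      ⟨fun a b => ⟨a ∪ b, Finset.subset_union_left, Finset.subset_union_right⟩⟩
    haveI hJdir : IsDirected J (· ≤ ·) := by
      constructor
      rintro ⟨F₁, n₁⟩ ⟨F₂, n₂⟩
      exact ⟨(F₁ ∪ F₂, max n₁ n₂),
        ⟨Finset.subset_union_left, le_max_left _ _⟩,
        ⟨Finset.subset_union_right, le_max_right _ _⟩⟩
    haveI hJne : Nonempty J := ⟨(∅, 0)⟩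
    set ρ : StrongDual ℝ X → D := fun f p => f p.1 with hρ
    set lift : D → StrongDual ℝ X := fun φ => if hφ : ∃ f : StrongDual ℝ X, ρ f = φ then hφ.choose else 0
      with hlift
    have hliftρ : ∀ f : StrongDual ℝ X, ρ (lift (ρ f)) = ρ f := by
      intro f
      have hex : ∃ f' : StrongDual ℝ X, ρ f' = ρ f := ⟨f, rfl⟩
      simp only [hlift, dif_pos hex]
      exact hex.choose_spec
    have hsel : ∀ j : J, ∃ x ∈ M, ∀ s ∈ j.1, |lift ((equivShrink D).symm s) x| < 1/(j.2+1) := by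
      intro j
      obtain ⟨G, n⟩ := j
      set e := G.equivFin with he
      obtain ⟨x, hxM, hx⟩ := hMdodge G.card (fun t => lift ((equivShrink D).symm (e.symm t).1))
        (1/(n+1)) (by positivity)
      refine ⟨x, hxM, fun s hs => ?_⟩
      have := hx (e ⟨s, hs⟩)
      simpa using this
    choose net hnetM hnet using hsel
    have hnorm : ∀ j : J, ‖net j‖ ≤ 1 := fun j => (hMsub (hnetM j)).1
    have hval : ∀ j : J, C + δ/2 < ‖y + σ • A (net j)‖ := fun j => (hMsub (hnetM j)).2
    have hweak : ∀ f : StrongDual ℝ X, Tendsto (fun j : J => f (net j)) atTop (𝓝 0) := by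
      intro f
      rw [Metric.tendsto_nhds]
      intro ε hε
      obtain ⟨n₀, hn₀⟩ := exists_nat_gt (1/ε)
      rw [eventually_atTop]
      refine ⟨({equivShrink D (ρ f)}, n₀), fun j hj => ?_⟩
      have hs : equivShrink D (ρ f) ∈ j.1 := hj.1 (Finset.mem_singleton_self _)
      have h1 := hnet j _ hs
      rw [Equiv.symm_apply_apply] at h1
      have h2 : lift (ρ f) (net j) = f (net j) := by
        have := congrFun (hliftρ f) ⟨net j, hnetM j⟩
        simpa [hρ] using this
      rw [h2] at h1
      have h3 : 1/((j.2:ℝ)+1) ≤ 1/((n₀:ℝ)+1) := by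
        apply one_div_le_one_div_of_le (by positivity)
        have := hj.2
        exact_mod_cast by exact_mod_cast add_le_add_left (Nat.cast_le.2 this) 1
      have h4 : 1/((n₀:ℝ)+1) < ε := by
        rw [div_lt_iff₀ (by positivity)]
        rw [div_lt_iff₀ hε] at hn₀
        nlinarith [hε]
      rw [Real.dist_eq, sub_zero]
      linarith
    have hlim := h J y hy net hnorm hweak
    have hlow : C + δ/2 ≤ limsup (fun j : J => ‖y + σ • A (net j)‖) atTop := by
      apply le_limsup_of_frequently_le
      · exact Filter.Frequently.of_forall (fun j => (hval j).le)
      · refine isBoundedUnder_of ⟨‖y‖ + σ * ‖A‖, fun j => ?_⟩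
        calc ‖y + σ • A (net j)‖ ≤ ‖y‖ + ‖σ • A (net j)‖ := norm_add_le _ _
          _ = ‖y‖ + σ * ‖A (net j)‖ := by
              rw [norm_smul, Real.norm_eq_abs, abs_of_pos hσ]
          _ ≤ ‖y‖ + σ * (‖A‖ * ‖net j‖) :=
              add_le_add_right (mul_le_mul_of_nonneg_left (A.le_opNorm _) hσ.le) _
          _ ≤ ‖y‖ + σ * (‖A‖ * 1) := by
              have h5 := mul_le_mul_of_nonneg_left (hnorm j) (norm_nonneg A)
              have h6 := mul_le_mul_of_nonneg_left h5 hσ.le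
              linarith
          _ = ‖y‖ + σ * ‖A‖ := by ring
    linarith
  · intro h ι _ _ _ y hy x hx hnull
    have h2 := h ι y hy (fun i => inclusionInDoubleDual ℝ X (x i))
      (fun i => le_trans (double_dual_bound ℝ X (x i)) (hx i))
      (fun f => by simpa [NormedSpace.dual_def] using hnull f)
    have heq : (fun i => ‖inclusionInDoubleDual ℝ Y y
        + σ • (inclusionInDoubleDual ℝ X (x i)).comp (opAdjoint A)‖)
        = fun i => ‖y + σ • A (x i)‖ := by
      funext i
      have h1 : (inclusionInDoubleDual ℝ X (x i)).comp (opAdjoint A)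
          = inclusionInDoubleDual ℝ Y (A (x i)) := by
        ext g; simp [opAdjoint, NormedSpace.dual_def]
      have h3 : ‖inclusionInDoubleDual ℝ Y (y + σ • A (x i))‖ = ‖y + σ • A (x i)‖ :=
        (inclusionInDoubleDualLi ℝ (E := Y)).norm_map _
      rw [h1, ← map_smul, ← map_add, h3]
    rwa [heq] at h2
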